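/- arXiv:1912.03193 — 2 statements merged into one kernel-verified Lean document; each statement's English description precedes it below -/
import Mathlib

section
/- Let γ ∈ [0,1) and let (R_t)_{t≥0} be a bounded sequence of real random variables with |R_t| ≤ R_max almost surely. Define J = (1-γ) E[∑_{t=0}^∞ γ^t R_t]. Then (1-γ)^2 E[(∑_{t=0}^∞ γ^t R_t - J/(1-γ))^2] ≤ (1-γ) E[∑_{t=0}^∞ γ^t (R_t - J)^2]. In words: the (normalized) return variance is bounded by the reward volatility. -/
open MeasureTheory Filter

/-- Cauchy–Schwarz / Jensen for a nonnegative weight sequence summing to 1. -/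
lemma aux_tsum_sq_le {w x : ℕ → ℝ} (hw : ∀ t, 0 ≤ w t) (hsw : Summable w)
    (hw1 : ∑' t, w t = 1)
    (h1 : Summable (fun t => w t * x t)) (h2 : Summable (fun t => w t * x t ^ 2)) :
    (∑' t, w t * x t) ^ 2 ≤ ∑' t, w t * x t ^ 2 := by
  have h2nn : ∀ t, 0 ≤ w t * x t ^ 2 := fun t => mul_nonneg (hw t) (sq_nonneg _)
  have key : ∀ F : Finset ℕ, (∑ t ∈ F, w t * x t) ^ 2 ≤ ∑' t, w t * x t ^ 2 := by
    intro F
    calc (∑ t ∈ F, w t * x t) ^ 2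
        = (∑ t ∈ F, Real.sqrt (w t) * (Real.sqrt (w t) * x t)) ^ 2 := by
          congr 1
          refine Finset.sum_congr rfl fun t _ => ?_
          rw [← mul_assoc, Real.mul_self_sqrt (hw t)]
      _ ≤ (∑ t ∈ F, Real.sqrt (w t) ^ 2) * ∑ t ∈ F, (Real.sqrt (w t) * x t) ^ 2 :=
          Finset.sum_mul_sq_le_sq_mul_sq ..
      _ = (∑ t ∈ F, w t) * ∑ t ∈ F, w t * x t ^ 2 := by
          congr 1
          · exact Finset.sum_congr rfl fun t _ => Real.sq_sqrt (hw t)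
          · refine Finset.sum_congr rfl fun t _ => ?_
            rw [mul_pow, Real.sq_sqrt (hw t)]
      _ ≤ 1 * ∑' t, w t * x t ^ 2 := by
          apply mul_le_mul
          · rw [← hw1]; exact Summable.sum_le_tsum F (fun t _ => hw t) hsw
          · exact Summable.sum_le_tsum F (fun t _ => h2nn t) h2
          · exact Finset.sum_nonneg fun t _ => h2nn t
          · exact zero_le_one
      _ = ∑' t, w t * x t ^ 2 := one_mul _
  have htend : Tendsto (fun F : Finset ℕ => (∑ t ∈ F, w t * x t) ^ 2) atTop
      (nhds ((∑' t, w t * x t) ^ 2)) := h1.hasSum.pow 2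
  exact le_of_tendsto htend (Eventually.of_forall key)

theorem stmt_0 {Ω : Type*} [MeasureSpace Ω] [IsProbabilityMeasure (volume : Measure Ω)]
    (γ Rmax : ℝ) (hγ0 : 0 ≤ γ) (hγ1 : γ < 1)
    (R : ℕ → Ω → ℝ) (hmeas : ∀ t, Measurable (R t))
    (hbd : ∀ t, ∀ᵐ ω, |R t ω| ≤ Rmax)
    (J : ℝ) (hJ : J = (1 - γ) * ∫ ω, ∑' t : ℕ, γ ^ t * R t ω) :
    (1 - γ) ^ 2 * ∫ ω, ((∑' t : ℕ, γ ^ t * R t ω) - J / (1 - γ)) ^ 2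
      ≤ (1 - γ) * ∫ ω, ∑' t : ℕ, γ ^ t * (R t ω - J) ^ 2 := by
  have h1γ : (0:ℝ) < 1 - γ := by linarith
  have hbd' : ∀ᵐ ω, ∀ t, |R t ω| ≤ Rmax := ae_all_iff.2 hbd
  have hgeo : Summable fun t : ℕ => γ ^ t := summable_geometric_of_lt_one hγ0 hγ1
  set C : ℝ := Rmax + |J| with hC
  -- summability facts on the good set
  have hsum2 : ∀ ω, (∀ t, |R t ω| ≤ Rmax) → Summable fun t => γ ^ t * (R t ω - J) := by
    intro ω hω
    refine Summable.of_norm_bounded (g := fun t => C * γ ^ t) (hgeo.mul_left C) fun t => ?_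
    have h1 : |R t ω - J| ≤ C := (abs_sub _ _).trans (by simp [hC, hω t])
    have : ‖γ ^ t * (R t ω - J)‖ = γ ^ t * |R t ω - J| := by
      rw [norm_mul, Real.norm_eq_abs, Real.norm_eq_abs, abs_pow, abs_of_nonneg hγ0]
    rw [this, mul_comm]
    exact mul_le_mul_of_nonneg_right h1 (pow_nonneg hγ0 t) |>.trans_eq (mul_comm _ _) |>.trans_eq
      (mul_comm _ _)
  have hsum3 : ∀ ω, (∀ t, |R t ω| ≤ Rmax) → Summable fun t => γ ^ t * (R t ω - J) ^ 2 := by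
    intro ω hω
    refine Summable.of_norm_bounded (g := fun t => C ^ 2 * γ ^ t) (hgeo.mul_left _) fun t => ?_
    have h1 : |R t ω - J| ≤ C := (abs_sub _ _).trans (by simp [hC, hω t])
    have hCnn : 0 ≤ C := (abs_nonneg _).trans h1
    have h2 : (R t ω - J) ^ 2 ≤ C ^ 2 := by
      rw [← sq_abs]; exact pow_le_pow_left₀ (abs_nonneg _) h1 2
    have : ‖γ ^ t * (R t ω - J) ^ 2‖ = γ ^ t * (R t ω - J) ^ 2 := by
      rw [Real.norm_eq_abs, abs_of_nonneg (mul_nonneg (pow_nonneg hγ0 t) (sq_nonneg _))]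
    rw [this, mul_comm]
    exact mul_le_mul_of_nonneg_right h2 (pow_nonneg hγ0 t)
  have hsum1 : ∀ ω, (∀ t, |R t ω| ≤ Rmax) → Summable fun t => γ ^ t * R t ω := by
    intro ω hω
    have := (hsum2 ω hω).add (hgeo.mul_right J)
    refine this.congr fun t => ?_
    ring
  -- pointwise inequality
  have hpt : ∀ᵐ ω, (1 - γ) ^ 2 * ((∑' t : ℕ, γ ^ t * R t ω) - J / (1 - γ)) ^ 2
      ≤ (1 - γ) * ∑' t : ℕ, γ ^ t * (R t ω - J) ^ 2 := by
    filter_upwards [hbd'] with ω hω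
    have e1 : (∑' t : ℕ, γ ^ t * R t ω) - J / (1 - γ) = ∑' t : ℕ, γ ^ t * (R t ω - J) := by
      have : ∀ t : ℕ, γ ^ t * (R t ω - J) = γ ^ t * R t ω - J * γ ^ t := fun t => by ring
      rw [tsum_congr this, Summable.tsum_sub (hsum1 ω hω) (hgeo.mul_left J), tsum_mul_left,
        tsum_geometric_of_lt_one hγ0 hγ1, div_eq_mul_inv]
    rw [e1]
    set w : ℕ → ℝ := fun t => (1 - γ) * γ ^ t with hwdef
    have hw : ∀ t, 0 ≤ w t := fun t => mul_nonneg h1γ.le (pow_nonneg hγ0 t)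
    have hsw : Summable w := hgeo.mul_left _
    have hw1 : ∑' t, w t = 1 := by
      rw [hwdef, tsum_mul_left, tsum_geometric_of_lt_one hγ0 hγ1,
        mul_inv_cancel₀ h1γ.ne']
    have key := aux_tsum_sq_le (x := fun t => R t ω - J) hw hsw hw1
      (((hsum2 ω hω).mul_left (1 - γ)).congr fun t => by simp [hwdef, mul_assoc])
      (((hsum3 ω hω).mul_left (1 - γ)).congr fun t => by simp [hwdef, mul_assoc])
    have lhs_eq : ∑' t, w t * (R t ω - J) = (1 - γ) * ∑' t : ℕ, γ ^ t * (R t ω - J) := by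
      rw [← tsum_mul_left]; exact tsum_congr fun t => by simp [hwdef, mul_assoc]
    have rhs_eq : ∑' t, w t * (R t ω - J) ^ 2
        = (1 - γ) * ∑' t : ℕ, γ ^ t * (R t ω - J) ^ 2 := by
      rw [← tsum_mul_left]; exact tsum_congr fun t => by simp [hwdef, mul_assoc]
    calc (1 - γ) ^ 2 * (∑' t : ℕ, γ ^ t * (R t ω - J)) ^ 2
        = (∑' t, w t * (R t ω - J)) ^ 2 := by rw [lhs_eq]; ring
      _ ≤ ∑' t, w t * (R t ω - J) ^ 2 := key
      _ = (1 - γ) * ∑' t : ℕ, γ ^ t * (R t ω - J) ^ 2 := rhs_eq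
  -- measurability of the RHS integrand
  have hmeasG : AEMeasurable (fun ω => ∑' t : ℕ, γ ^ t * (R t ω - J) ^ 2) volume := by
    refine aemeasurable_of_tendsto_metrizable_ae' (f := fun n ω =>
      ∑ t ∈ Finset.range n, γ ^ t * (R t ω - J) ^ 2) (fun n => ?_) ?_
    · exact (Finset.measurable_sum _ fun t _ =>
        (((hmeas t).sub measurable_const).pow_const 2).const_mul _).aemeasurable
    · filter_upwards [hbd'] with ω hω
      exact (hsum3 ω hω).hasSum.tendsto_sum_nat
  -- integrability of the RHS
  have hint : Integrable (fun ω => (1 - γ) * ∑' t : ℕ, γ ^ t * (R t ω - J) ^ 2) volume := by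
    refine Integrable.mono' (integrable_const ((1 - γ) * (C ^ 2 * (1 - γ)⁻¹)))
      ((hmeasG.const_mul _).aestronglyMeasurable) ?_
    filter_upwards [hbd'] with ω hω
    have hbound : ∀ t, γ ^ t * (R t ω - J) ^ 2 ≤ C ^ 2 * γ ^ t := by
      intro t
      have h1 : |R t ω - J| ≤ C := (abs_sub _ _).trans (by simp [hC, hω t])
      have h2 : (R t ω - J) ^ 2 ≤ C ^ 2 := by
        rw [← sq_abs]; exact pow_le_pow_left₀ (abs_nonneg _) h1 2
      rw [mul_comm]
      exact mul_le_mul_of_nonneg_right h2 (pow_nonneg hγ0 t)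
    have htle : ∑' t : ℕ, γ ^ t * (R t ω - J) ^ 2 ≤ C ^ 2 * (1 - γ)⁻¹ := by
      calc ∑' t : ℕ, γ ^ t * (R t ω - J) ^ 2
          ≤ ∑' t : ℕ, C ^ 2 * γ ^ t :=
            Summable.tsum_le_tsum hbound (hsum3 ω hω) (hgeo.mul_left _)
        _ = C ^ 2 * (1 - γ)⁻¹ := by
            rw [tsum_mul_left, tsum_geometric_of_lt_one hγ0 hγ1]
    have hnn : 0 ≤ ∑' t : ℕ, γ ^ t * (R t ω - J) ^ 2 :=
      tsum_nonneg fun t => mul_nonneg (pow_nonneg hγ0 t) (sq_nonneg _)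
    rw [Real.norm_eq_abs, abs_of_nonneg (mul_nonneg h1γ.le hnn)]
    exact mul_le_mul_of_nonneg_left htle h1γ.le
  -- put it together
  rw [← integral_const_mul, ← integral_const_mul]
  refine integral_mono_of_nonneg ?_ hint hpt
  exact Eventually.of_forall fun ω => mul_nonneg (sq_nonneg _) (sq_nonneg _)
end

section
/- (Performance difference for expected return, Kakade–Langford) For a finite MDP with two policies π and π̃, define J_π = (1-γ) E_{τ|π}[∑_t γ^t R(s_t,a_t)], the value function V_π, and advantage A_π(s,a) = Q_π(s,a) - V_π(s). Then J_{π̃} = J_π + (1-γ) E_{τ|π̃}[∑_{t=0}^∞ γ^t A_π(s_t,a_t)], where the expectation is over trajectories generated by π̃ from initial distribution μ. -/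
open Finset

/-- t-step iterate of a transition kernel on a finite space. -/
noncomputable def kerPow {T : Type*} [Fintype T] [DecidableEq T] (K : T → T → ℝ) :
    ℕ → T → T → ℝ
  | 0 => fun s s' => if s = s' then 1 else 0
  | (t + 1) => fun s s' => ∑ u, K s u * kerPow K t u s'

/-- State-action transition kernel induced by the MDP dynamics `P` and the policy `π`. -/
def saKer {S A : Type*} (P : S → A → S → ℝ) (π : S → A → ℝ) :
    S × A → S × A → ℝ :=
  fun p q => P p.1 p.2 q.1 * π q.1 q.2

/-- Expected discounted sum of `f(s_t, a_t)` starting from `(s,a)`, following `π`. -/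
noncomputable def Qgen {S A : Type*} [Fintype S] [Fintype A] [DecidableEq S] [DecidableEq A]
    (P : S → A → S → ℝ) (π : S → A → ℝ) (f : S → A → ℝ) (γ : ℝ) (s : S) (a : A) : ℝ :=
  ∑' t : ℕ, γ ^ t * ∑ p : S × A, kerPow (saKer P π) t (s, a) p * f p.1 p.2

/-- Expected discounted sum `E_{τ|π}[∑ₜ γ^t f(s_t,a_t)]` over trajectories started
from the initial distribution `μ` and following `π`. -/
noncomputable def expDisc {S A : Type*} [Fintype S] [Fintype A] [DecidableEq S] [DecidableEq A]
    (P : S → A → S → ℝ) (π : S → A → ℝ) (μ : S → ℝ) (γ : ℝ) (f : S → A → ℝ) : ℝ :=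
  ∑ s, μ s * ∑ a, π s a * Qgen P π f γ s a

set_option linter.unusedSectionVars false
set_option linter.unusedVariables false

section Helpers
variable {T : Type*} [Fintype T] [DecidableEq T] (K : T → T → ℝ)

lemma kerPow_nonneg (hK0 : ∀ p q, 0 ≤ K p q) : ∀ t p q, 0 ≤ kerPow K t p q
  | 0, p, q => by simp only [kerPow]; split <;> norm_num
  | (t+1), p, q => Finset.sum_nonneg fun u _ =>
      mul_nonneg (hK0 p u) (kerPow_nonneg hK0 t u q)

lemma kerPow_rowsum (hK1 : ∀ p, ∑ q, K p q = 1) : ∀ t p, ∑ q, kerPow K t p q = 1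
  | 0, p => by simp [kerPow]
  | (t+1), p => by
    simp only [kerPow]
    rw [Finset.sum_comm]
    have : ∀ u ∈ Finset.univ (α := T), ∑ q, K p u * kerPow K t u q = K p u := by
      intro u _
      rw [← Finset.mul_sum, kerPow_rowsum hK1 t u, mul_one]
    rw [Finset.sum_congr rfl this, hK1]

lemma kerPow_le_one (hK0 : ∀ p q, 0 ≤ K p q) (hK1 : ∀ p, ∑ q, K p q = 1)
    (t : ℕ) (p q : T) : kerPow K t p q ≤ 1 := by
  calc kerPow K t p q ≤ ∑ q', kerPow K t p q' :=
        Finset.single_le_sum (fun q' _ => kerPow_nonneg K hK0 t p q') (Finset.mem_univ q)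
  _ = 1 := kerPow_rowsum K hK1 t p

lemma kerPow_succ_right (t : ℕ) (p q : T) :
    kerPow K (t + 1) p q = ∑ u, kerPow K t p u * K u q := by
  induction t generalizing p q with
  | zero => simp [kerPow]
  | succ t ih =>
    show ∑ u, K p u * kerPow K (t + 1) u q = _
    calc ∑ u, K p u * kerPow K (t + 1) u q
        = ∑ u, K p u * ∑ v, kerPow K t u v * K v q := by simp_rw [ih]
      _ = ∑ v, (∑ u, K p u * kerPow K t u v) * K v q := by
          simp_rw [Finset.mul_sum, Finset.sum_mul]
          rw [Finset.sum_comm]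
          exact Finset.sum_congr rfl fun v _ => Finset.sum_congr rfl fun u _ => by ring
      _ = ∑ v, kerPow K (t + 1) p v * K v q := by simp [kerPow]

lemma summable_ker (hK0 : ∀ p q, 0 ≤ K p q) (hK1 : ∀ p, ∑ q, K p q = 1)
    (f : T → ℝ) {γ : ℝ} (hγ0 : 0 ≤ γ) (hγ1 : γ < 1) (p : T) :
    Summable (fun t => γ ^ t * ∑ q, kerPow K t p q * f q) := by
  apply Summable.of_norm_bounded (g := fun t => γ ^ t * ∑ q, |f q|)
    ((summable_geometric_of_lt_one hγ0 hγ1).mul_right _)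
  intro t
  rw [Real.norm_eq_abs, abs_mul, abs_pow, abs_of_nonneg hγ0]
  refine mul_le_mul_of_nonneg_left ?_ (pow_nonneg hγ0 t)
  calc |∑ q, kerPow K t p q * f q| ≤ ∑ q, |kerPow K t p q * f q| :=
        Finset.abs_sum_le_sum_abs _ _
  _ ≤ ∑ q, |f q| := Finset.sum_le_sum fun q _ => by
      rw [abs_mul, abs_of_nonneg (kerPow_nonneg K hK0 t p q)]
      exact mul_le_of_le_one_left (abs_nonneg _) (kerPow_le_one K hK0 hK1 t p q)

end Helpers


section MDP
variable {S A : Type*} [Fintype S] [Fintype A] [DecidableEq S] [DecidableEq A]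
  (P : S → A → S → ℝ) (π : S → A → ℝ)
  (hP0 : ∀ s a s', 0 ≤ P s a s') (hP1 : ∀ s a, ∑ s', P s a s' = 1)
  (hπ0 : ∀ s a, 0 ≤ π s a) (hπ1 : ∀ s, ∑ a, π s a = 1)
  {γ : ℝ} (hγ0 : 0 ≤ γ) (hγ1 : γ < 1)

include hP0 hP1 hπ0 hπ1 in
lemma saKer_nonneg : ∀ p q, 0 ≤ saKer P π p q :=
  fun p q => mul_nonneg (hP0 _ _ _) (hπ0 _ _)

include hP0 hP1 hπ0 hπ1 in
lemma saKer_rowsum : ∀ p, ∑ q, saKer P π p q = 1 := by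
  intro p
  rw [Fintype.sum_prod_type]
  simp only [saKer]
  calc ∑ s', ∑ a', P p.1 p.2 s' * π s' a'
      = ∑ s', P p.1 p.2 s' * ∑ a', π s' a' := by simp_rw [Finset.mul_sum]
    _ = 1 := by simp_rw [hπ1, mul_one]; exact hP1 _ _

include hP0 hP1 hπ0 hπ1 hγ0 hγ1 in
lemma summable_Qgen (f : S → A → ℝ) (s : S) (a : A) :
    Summable (fun t => γ ^ t * ∑ p : S × A, kerPow (saKer P π) t (s, a) p * f p.1 p.2) :=
  summable_ker _ (saKer_nonneg P π hP0 hP1 hπ0 hπ1) (saKer_rowsum P π hP0 hP1 hπ0 hπ1)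
    (fun p => f p.1 p.2) hγ0 hγ1 _

-- Bellman-style recursion
include hP0 hP1 hπ0 hπ1 hγ0 hγ1 in
lemma Qgen_rec (f : S → A → ℝ) (s : S) (a : A) :
    Qgen P π f γ s a
      = f s a + γ * ∑ q : S × A, saKer P π (s, a) q * Qgen P π f γ q.1 q.2 := by
  set K := saKer P π with hK
  have hsum := summable_Qgen P π hP0 hP1 hπ0 hπ1 hγ0 hγ1 f
  rw [Qgen, (hsum s a).tsum_eq_zero_add]
  congr 1
  · simp [kerPow]
  · have step : ∀ t : ℕ,
        γ ^ (t + 1) * ∑ p : S × A, kerPow K (t + 1) (s, a) p * f p.1 p.2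
        = ∑ q : S × A, K (s, a) q * (γ * (γ ^ t * ∑ p : S × A, kerPow K t q p * f p.1 p.2)) := by
      intro t
      simp only [kerPow, Finset.sum_mul, Finset.mul_sum, pow_succ]
      rw [Finset.sum_comm]
      exact Finset.sum_congr rfl fun q _ => Finset.sum_congr rfl fun p _ => by ring
    rw [← hK]
    simp_rw [step]
    rw [Summable.tsum_finsetSum (fun q _ => by
      exact (((hsum q.1 q.2).mul_left γ).mul_left (K (s, a) q)))]
    rw [Finset.mul_sum]
    refine Finset.sum_congr rfl fun q _ => ?_
    rw [tsum_mul_left, tsum_mul_left, Qgen]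
    ring

-- key kernel identity: averaging g over next state
include hP0 hP1 hπ0 hπ1 in
lemma saKer_avg (g : S → ℝ) (p : S × A) :
    ∑ q : S × A, saKer P π p q * g q.1 = ∑ u, P p.1 p.2 u * g u := by
  rw [Fintype.sum_prod_type]
  refine Finset.sum_congr rfl fun u _ => ?_
  simp only [saKer]
  rw [← Finset.sum_mul, ← Finset.mul_sum, hπ1, mul_one]

-- telescoping
include hP0 hP1 hπ0 hπ1 hγ0 hγ1 in
lemma Qgen_tele (g : S → ℝ) (s : S) (a : A) :
    Qgen P π (fun s' a' => γ * (∑ u, P s' a' u * g u) - g s') γ s a = - g s := by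
  set K := saKer P π with hKdef
  have hK0 := saKer_nonneg P π hP0 hP1 hπ0 hπ1
  have hK1 := saKer_rowsum P π hP0 hP1 hπ0 hπ1
  set c : ℕ → ℝ := fun t => γ ^ t * ∑ p : S × A, kerPow K t (s, a) p * g p.1 with hc
  have hcs : Summable c := summable_ker K hK0 hK1 (fun p => g p.1) hγ0 hγ1 _
  have key : ∀ t : ℕ,
      γ ^ t * ∑ p : S × A, kerPow K t (s, a) p * (γ * (∑ u, P p.1 p.2 u * g u) - g p.1)
      = c (t + 1) - c t := by
    intro t
    have h1 : ∀ p : S × A, ∑ u, P p.1 p.2 u * g u = ∑ q : S × A, K p q * g q.1 :=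
      fun p => (saKer_avg P π hP0 hP1 hπ0 hπ1 g p).symm
    simp_rw [h1]
    have h2 : ∑ p : S × A, kerPow K t (s, a) p * (γ * (∑ q : S × A, K p q * g q.1) - g p.1)
        = γ * (∑ q : S × A, kerPow K (t + 1) (s, a) q * g q.1)
          - ∑ p : S × A, kerPow K t (s, a) p * g p.1 := by
      simp_rw [mul_sub]
      rw [Finset.sum_sub_distrib]
      congr 1
      have hp : ∀ p : S × A, kerPow K t (s, a) p * (γ * ∑ q : S × A, K p q * g q.1)
          = ∑ q : S × A, γ * (kerPow K t (s, a) p * K p q * g q.1) := fun p => by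
        rw [Finset.mul_sum, Finset.mul_sum]
        exact Finset.sum_congr rfl fun q _ => by ring
      rw [Finset.sum_congr rfl (fun p _ => hp p), Finset.sum_comm, Finset.mul_sum]
      refine Finset.sum_congr rfl fun q _ => ?_
      rw [kerPow_succ_right, Finset.sum_mul, ← Finset.mul_sum]
    rw [h2, hc]
    ring
  rw [Qgen, ← hKdef]
  simp_rw [key]
  rw [Summable.tsum_sub ((summable_nat_add_iff 1).mpr hcs) hcs]
  have := hcs.tsum_eq_zero_add
  have hc0 : c 0 = g s := by simp [hc, kerPow]
  linarith

-- additivity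
include hP0 hP1 hπ0 hπ1 hγ0 hγ1 in
lemma Qgen_add (f g : S → A → ℝ) (s : S) (a : A) :
    Qgen P π (fun s' a' => f s' a' + g s' a') γ s a
      = Qgen P π f γ s a + Qgen P π g γ s a := by
  have hf := summable_Qgen P π hP0 hP1 hπ0 hπ1 hγ0 hγ1 f s a
  have hg := summable_Qgen P π hP0 hP1 hπ0 hπ1 hγ0 hγ1 g s a
  rw [Qgen, Qgen, Qgen, ← hf.tsum_add hg]
  refine tsum_congr fun t => ?_
  rw [← mul_add, ← Finset.sum_add_distrib]
  congr 1
  exact Finset.sum_congr rfl fun p _ => by ring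

end MDP

/-- Performance difference lemma (Kakade–Langford) for the normalized expected return. -/
theorem stmt_9 {S A : Type*} [Fintype S] [Fintype A] [DecidableEq S] [DecidableEq A]
    (P : S → A → S → ℝ) (π πt : S → A → ℝ) (R : S → A → ℝ) (γ : ℝ) (μ : S → ℝ)
    (hP0 : ∀ s a s', 0 ≤ P s a s') (hP1 : ∀ s a, ∑ s', P s a s' = 1)
    (hπ0 : ∀ s a, 0 ≤ π s a) (hπ1 : ∀ s, ∑ a, π s a = 1)
    (hπt0 : ∀ s a, 0 ≤ πt s a) (hπt1 : ∀ s, ∑ a, πt s a = 1)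
    (hμ0 : ∀ s, 0 ≤ μ s) (hμ1 : ∑ s, μ s = 1)
    (hγ0 : 0 ≤ γ) (hγ1 : γ < 1)
    (Jπ Jπt : ℝ) (Q : S → A → ℝ) (V : S → ℝ) (Adv : S → A → ℝ)
    (hJπ : Jπ = (1 - γ) * expDisc P π μ γ R)
    (hJπt : Jπt = (1 - γ) * expDisc P πt μ γ R)
    (hQ : ∀ s a, Q s a = Qgen P π R γ s a)
    (hV : ∀ s, V s = ∑ a, π s a * Q s a)
    (hA : ∀ s a, Adv s a = Q s a - V s) :
    Jπt = Jπ + (1 - γ) * expDisc P πt μ γ Adv := by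
  -- Bellman equation for π gives a formula for the advantage
  have hAdv : ∀ s a, Adv s a = R s a + (γ * (∑ u, P s a u * V u) - V s) := by
    intro s a
    rw [hA, hQ, Qgen_rec P π hP0 hP1 hπ0 hπ1 hγ0 hγ1 R s a]
    have h : ∑ q : S × A, saKer P π (s, a) q * Qgen P π R γ q.1 q.2
        = ∑ u, P s a u * V u := by
      rw [Fintype.sum_prod_type]
      refine Finset.sum_congr rfl fun u _ => ?_
      rw [hV u, Finset.mul_sum]
      refine Finset.sum_congr rfl fun b _ => ?_
      simp only [saKer]
      rw [hQ]
      ring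
    rw [h]
    ring
  have hfun : Adv = fun s' a' => R s' a' + (γ * (∑ u, P s' a' u * V u) - V s') :=
    funext fun s' => funext fun a' => hAdv s' a'
  -- telescoping identity for the πt-process
  have key : ∀ s a, Qgen P πt Adv γ s a = Qgen P πt R γ s a - V s := by
    intro s a
    calc Qgen P πt Adv γ s a
        = Qgen P πt (fun s' a' => R s' a' + (γ * (∑ u, P s' a' u * V u) - V s')) γ s a := by
          rw [hfun]
      _ = Qgen P πt R γ s a
          + Qgen P πt (fun s' a' => γ * (∑ u, P s' a' u * V u) - V s') γ s a :=
          Qgen_add P πt hP0 hP1 hπt0 hπt1 hγ0 hγ1 R _ s a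
      _ = Qgen P πt R γ s a - V s := by
          rw [Qgen_tele P πt hP0 hP1 hπt0 hπt1 hγ0 hγ1 V s a]; ring
  have hE1 : expDisc P πt μ γ Adv = expDisc P πt μ γ R - ∑ s, μ s * V s := by
    rw [expDisc, expDisc, ← Finset.sum_sub_distrib]
    refine Finset.sum_congr rfl fun s _ => ?_
    rw [← mul_sub]
    congr 1
    calc ∑ a, πt s a * Qgen P πt Adv γ s a
        = ∑ a, (πt s a * Qgen P πt R γ s a - πt s a * V s) := by
          refine Finset.sum_congr rfl fun a _ => ?_
          rw [key s a]; ring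
      _ = (∑ a, πt s a * Qgen P πt R γ s a) - (∑ a, πt s a) * V s := by
          rw [Finset.sum_sub_distrib, Finset.sum_mul]
      _ = (∑ a, πt s a * Qgen P πt R γ s a) - V s := by rw [hπt1, one_mul]
  have hE2 : expDisc P π μ γ R = ∑ s, μ s * V s := by
    rw [expDisc]
    refine Finset.sum_congr rfl fun s _ => ?_
    rw [hV]
    congr 1
    exact Finset.sum_congr rfl fun a _ => by rw [hQ]
  rw [hJπt, hJπ, hE1, hE2]
  ring
end
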